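/- Let E be a real normed vector space and let f, g : E → ℝ be convex continuous functions admitting a common continuous affine minorant (there exist φ₀ ∈ E* and c ∈ ℝ with φ₀(u) − c ≤ f(u) and φ₀(u) − c ≤ g(u) for all u ∈ E). For s ∈ [0,1] define U_s(f,g)(x) = ∫₀¹ (f !_{st+(1−s)/2} g)(x) / ( t(1−t)(π² + (log(t/(1−t)))²) ) dt. Then for every s ∈ [0,1] and every x ∈ E, (f ! g)(x) ≤ U_s(f,g)(x) ≤ (1−s)(f ! g)(x) + s·L(f,g)(x) ≤ L(f,g)(x); moreover, for each fixed x the map s ↦ U_s(f,g)(x) is convex and monotone increasing on [0,1]. -/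

import Mathlib

open Real

open MeasureTheory Set

/-- The `t`-weighted functional harmonic mean of `f,g : E → ℝ`, evaluated at `x`. -/
noncomputable def funHarm {E : Type*} [NormedAddCommGroup E] [NormedSpace ℝ E]
    (f g : E → ℝ) (t : ℝ) (x : E) : ℝ :=
  sSup { r : ℝ | ∃ φ : E →L[ℝ] ℝ, ∃ c₁ c₂ : ℝ,
    (∀ u : E, φ u - f u ≤ c₁) ∧ (∀ u : E, φ u - g u ≤ c₂) ∧
    r = φ x - (1 - t) * c₁ - t * c₂ }

section Aux
variable {E : Type*} [NormedAddCommGroup E] [NormedSpace ℝ E]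
  {f g : E → ℝ} {x : E} {φ₀ : E →L[ℝ] ℝ} {c : ℝ}
  (hm : ∀ u, φ₀ u - c ≤ f u ∧ φ₀ u - c ≤ g u)

def harmSet (f g : E → ℝ) (t : ℝ) (x : E) : Set ℝ :=
  { r : ℝ | ∃ φ : E →L[ℝ] ℝ, ∃ c₁ c₂ : ℝ,
    (∀ u : E, φ u - f u ≤ c₁) ∧ (∀ u : E, φ u - g u ≤ c₂) ∧
    r = φ x - (1 - t) * c₁ - t * c₂ }

lemma funHarm_eq (t : ℝ) : funHarm f g t x = sSup (harmSet f g t x) := rfl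

include hm in
lemma harmSet_nonempty (t : ℝ) : (harmSet f g t x).Nonempty :=
  ⟨φ₀ x - (1 - t) * c - t * c, φ₀, c, c,
    fun u => by linarith [(hm u).1], fun u => by linarith [(hm u).2], rfl⟩

lemma harmSet_bddAbove {t : ℝ} (ht : t ∈ Icc (0:ℝ) 1) :
    BddAbove (harmSet f g t x) := by
  refine ⟨(1 - t) * f x + t * g x, fun r hr => ?_⟩
  obtain ⟨φ, c₁, c₂, h1, h2, rfl⟩ := hr
  have e1 : φ x - f x ≤ c₁ := h1 x
  have e2 : φ x - g x ≤ c₂ := h2 x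
  have ht0 : (0:ℝ) ≤ t := ht.1
  have ht1 : (0:ℝ) ≤ 1 - t := by linarith [ht.2]
  nlinarith [mul_le_mul_of_nonneg_left e1 ht1, mul_le_mul_of_nonneg_left e2 ht0]

include hm in
lemma funHarm_le {t : ℝ} (ht : t ∈ Icc (0:ℝ) 1) :
    funHarm f g t x ≤ (1 - t) * f x + t * g x := by
  rw [funHarm_eq]
  refine csSup_le (harmSet_nonempty hm t) fun r hr => ?_
  obtain ⟨φ, c₁, c₂, h1, h2, rfl⟩ := hr
  have e1 : φ x - f x ≤ c₁ := h1 x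
  have e2 : φ x - g x ≤ c₂ := h2 x
  have ht0 : (0:ℝ) ≤ t := ht.1
  have ht1 : (0:ℝ) ≤ 1 - t := by linarith [ht.2]
  nlinarith [mul_le_mul_of_nonneg_left e1 ht1, mul_le_mul_of_nonneg_left e2 ht0]

include hm in
lemma le_funHarm' {t : ℝ} (ht : t ∈ Icc (0:ℝ) 1) :
    φ₀ x - c ≤ funHarm f g t x := by
  rw [funHarm_eq]
  have hmem : φ₀ x - (1 - t) * c - t * c ∈ harmSet f g t x :=
    ⟨φ₀, c, c, fun u => by linarith [(hm u).1], fun u => by linarith [(hm u).2], rfl⟩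
  have := le_csSup (harmSet_bddAbove ht) hmem
  linarith [this, (by ring : φ₀ x - (1 - t) * c - t * c = φ₀ x - c)]

include hm in
lemma funHarm_convexOn : ConvexOn ℝ (Icc (0:ℝ) 1) (fun t => funHarm f g t x) := by
  refine ⟨convex_Icc _ _, fun t₁ ht₁ t₂ ht₂ a b ha hb hab => ?_⟩
  simp only [smul_eq_mul]
  rw [funHarm_eq]
  refine csSup_le (harmSet_nonempty hm _) fun r hr => ?_
  obtain ⟨φ, c₁, c₂, h1, h2, rfl⟩ := hr
  have m1 : φ x - (1 - t₁) * c₁ - t₁ * c₂ ≤ funHarm f g t₁ x :=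
    le_csSup (harmSet_bddAbove ht₁) ⟨φ, c₁, c₂, h1, h2, rfl⟩
  have m2 : φ x - (1 - t₂) * c₁ - t₂ * c₂ ≤ funHarm f g t₂ x :=
    le_csSup (harmSet_bddAbove ht₂) ⟨φ, c₁, c₂, h1, h2, rfl⟩
  have : φ x - (1 - (a * t₁ + b * t₂)) * c₁ - (a * t₁ + b * t₂) * c₂
      = a * (φ x - (1 - t₁) * c₁ - t₁ * c₂) + b * (φ x - (1 - t₂) * c₁ - t₂ * c₂) := by
    have hb' : b = 1 - a := by linarith
    subst hb'; ring
  rw [this]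
  have := add_le_add (mul_le_mul_of_nonneg_left m1 ha) (mul_le_mul_of_nonneg_left m2 hb)
  exact this

include hm in
lemma funHarm_abs_le {t : ℝ} (ht : t ∈ Icc (0:ℝ) 1) :
    |funHarm f g t x| ≤ |φ₀ x - c| + |f x| + |g x| := by
  have h1 := le_funHarm' (x := x) hm ht
  have h2 := funHarm_le (x := x) hm ht
  have ht0 : (0:ℝ) ≤ t := ht.1
  have ht1 : (0:ℝ) ≤ 1 - t := by linarith [ht.2]
  rw [abs_le]
  constructor
  · nlinarith [neg_abs_le (φ₀ x - c), abs_nonneg (f x), abs_nonneg (g x)]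
  · have u1 : (1 - t) * f x ≤ (1 - t) * |f x| :=
      mul_le_mul_of_nonneg_left (le_abs_self _) ht1
    have u2 : t * g x ≤ t * |g x| := mul_le_mul_of_nonneg_left (le_abs_self _) ht0
    nlinarith [abs_nonneg (φ₀ x - c), abs_nonneg (f x), abs_nonneg (g x)]

include hm in
lemma funHarm_contOn : ContinuousOn (fun t => funHarm f g t x) (Ioo (0:ℝ) 1) :=
  ((funHarm_convexOn hm).subset Ioo_subset_Icc_self (convex_Ioo _ _)).continuousOn isOpen_Ioo

end Aux


noncomputable def psi (t : ℝ) : ℝ :=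
  (t * (1 - t) * (π ^ 2 + Real.log (t / (1 - t)) ^ 2))⁻¹

lemma psi_denom_pos {t : ℝ} (ht : t ∈ Ioo (0:ℝ) 1) :
    0 < t * (1 - t) * (π ^ 2 + Real.log (t / (1 - t)) ^ 2) := by
  have h1 : 0 < t := ht.1
  have h2 : 0 < 1 - t := by linarith [ht.2]
  have := pi_pos
  positivity

lemma psi_pos {t : ℝ} (ht : t ∈ Ioo (0:ℝ) 1) : 0 < psi t :=
  inv_pos.mpr (psi_denom_pos ht)

lemma psi_contOn : ContinuousOn psi (Ioo (0:ℝ) 1) := by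
  have hdiv : ContinuousOn (fun t : ℝ => t / (1 - t)) (Ioo (0:ℝ) 1) := by
    apply ContinuousOn.div (by fun_prop) (by fun_prop)
    intro t ht
    have h2 : 0 < 1 - t := by linarith [ht.2]
    exact h2.ne'
  apply ContinuousOn.inv₀
  · apply ContinuousOn.mul (by fun_prop)
    exact (continuousOn_const.add (((hdiv.log (fun t ht => by
      have h1 : 0 < t := ht.1
      have h2 : 0 < 1 - t := by linarith [ht.2]
      positivity)).pow 2)))
  · exact fun t ht => (psi_denom_pos ht).ne'

lemma psi_symm (t : ℝ) : psi (1 - t) = psi t := by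
  unfold psi
  have : (1 - t) / (1 - (1 - t)) = (t / (1 - t))⁻¹ := by
    rw [inv_div]; ring_nf
  rw [this, Real.log_inv]
  ring_nf

/-- the logistic map -/
noncomputable def sig (u : ℝ) : ℝ := (1 + Real.exp (-u))⁻¹

lemma sig_pos (u : ℝ) : 0 < sig u := by
  unfold sig; positivity

lemma sig_lt_one (u : ℝ) : sig u < 1 := by
  unfold sig
  rw [inv_lt_one_iff₀]
  right; linarith [Real.exp_pos (-u)]

lemma sig_hasDerivAt (u : ℝ) :
    HasDerivAt sig (sig u * (1 - sig u)) u := by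
  have h1 : HasDerivAt (fun u : ℝ => 1 + Real.exp (-u)) (-Real.exp (-u)) u := by
    simpa using ((Real.hasDerivAt_exp (-u)).comp u (hasDerivAt_neg u)).const_add 1
  have h2 : (1 + Real.exp (-u)) ≠ 0 := by positivity
  have := h1.inv h2
  refine this.congr_deriv (Eq.symm ?_)
  unfold sig
  have e : 1 - (1 + Real.exp (-u))⁻¹ = Real.exp (-u) / (1 + Real.exp (-u)) := by
    field_simp
    ring
  rw [e]
  field_simp

lemma sig_one_sub (u : ℝ) : 1 - sig u = Real.exp (-u) * sig u := by
  unfold sig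
  have h2 : (1 + Real.exp (-u)) ≠ 0 := by positivity
  field_simp
  ring

lemma sig_ratio (u : ℝ) : sig u / (1 - sig u) = Real.exp u := by
  rw [sig_one_sub, mul_comm, div_mul_eq_div_div, div_self (sig_pos u).ne', one_div,
    ← Real.exp_neg, neg_neg]

lemma sig_injOn : Function.Injective sig := by
  intro u v huv
  unfold sig at huv
  have h1 : (0:ℝ) < 1 + Real.exp (-u) := by positivity
  have h2 : (0:ℝ) < 1 + Real.exp (-v) := by positivity
  have := inv_injective huv
  have : Real.exp (-u) = Real.exp (-v) := by linarith
  have := Real.exp_injective this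
  linarith

lemma sig_image : sig '' univ = Ioo (0:ℝ) 1 := by
  apply Subset.antisymm
  · rintro _ ⟨u, -, rfl⟩
    exact ⟨sig_pos u, sig_lt_one u⟩
  · rintro t ⟨h1, h2⟩
    refine ⟨Real.log (t / (1 - t)), mem_univ _, ?_⟩
    unfold sig
    have h3 : 0 < 1 - t := by linarith
    have e1 : Real.exp (-(Real.log (t / (1 - t)))) = (1 - t) / t := by
      rw [Real.exp_neg, Real.exp_log (by positivity), inv_div]
    rw [e1]
    have e2 : 1 + (1 - t) / t = t⁻¹ := by field_simp; ring
    rw [e2, inv_inv]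

lemma integral_inv_pi_sq_add_sq : ∫ u : ℝ, (π ^ 2 + u ^ 2)⁻¹ = 1 := by
  have h : ∀ u : ℝ, (π ^ 2 + u ^ 2)⁻¹ = (π ^ 2)⁻¹ * (1 + (π⁻¹ * u) ^ 2)⁻¹ := by
    intro u
    rw [mul_pow, ← mul_inv]
    congr 1
    have := pi_ne_zero
    field_simp
  simp_rw [h]
  rw [MeasureTheory.integral_const_mul]
  rw [MeasureTheory.Measure.integral_comp_mul_left (fun y => (1 + y ^ 2)⁻¹) π⁻¹]
  rw [integral_univ_inv_one_add_sq]
  have := pi_pos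
  rw [abs_of_pos (by positivity), smul_eq_mul, inv_inv]
  field_simp

lemma psi_subst_pointwise (u : ℝ) :
    |sig u * (1 - sig u)| • psi (sig u) = (π ^ 2 + u ^ 2)⁻¹ := by
  have h1 : 0 < sig u := sig_pos u
  have h2 : sig u < 1 := sig_lt_one u
  have key : Real.log (sig u / (1 - sig u)) = u := by rw [sig_ratio]; exact Real.log_exp u
  unfold psi
  rw [key, abs_of_pos (by nlinarith), smul_eq_mul]
  rw [mul_inv, ← mul_assoc, mul_inv_cancel₀ (by nlinarith), one_mul]

lemma integrable_inv_pi_sq_add_sq : Integrable (fun u : ℝ => (π ^ 2 + u ^ 2)⁻¹) := by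
  have h : ∀ u : ℝ, (π ^ 2 + u ^ 2)⁻¹ = (π ^ 2)⁻¹ * (1 + (π⁻¹ * u) ^ 2)⁻¹ := by
    intro u
    rw [mul_pow, ← mul_inv]
    congr 1
    have := pi_ne_zero
    field_simp
  simp_rw [h]
  apply Integrable.const_mul
  exact (integrable_inv_one_add_sq).comp_mul_left' (R := π⁻¹) (by positivity)

lemma psi_integrableOn : IntegrableOn psi (Ioo (0:ℝ) 1) := by
  rw [← sig_image]
  rw [integrableOn_image_iff_integrableOn_abs_deriv_smul MeasurableSet.univ
    (fun u _ => (sig_hasDerivAt u).hasDerivWithinAt) (sig_injOn.injOn)]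
  rw [integrableOn_univ]
  exact integrable_inv_pi_sq_add_sq.congr
    (Filter.Eventually.of_forall fun u => (psi_subst_pointwise u).symm)

lemma psi_integral_one : ∫ t in Ioo (0:ℝ) 1, psi t = 1 := by
  rw [← sig_image]
  rw [integral_image_eq_integral_abs_deriv_smul MeasurableSet.univ
    (fun u _ => (sig_hasDerivAt u).hasDerivWithinAt) (sig_injOn.injOn)]
  rw [Measure.restrict_univ]
  simp_rw [psi_subst_pointwise]
  exact integral_inv_pi_sq_add_sq

/-- The `λ`-weighted functional geometric mean of `f,g : E → ℝ`, evaluated at `x`. -/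
noncomputable def funGeom {E : Type*} [NormedAddCommGroup E] [NormedSpace ℝ E]
    (f g : E → ℝ) (l : ℝ) (x : E) : ℝ :=
  (Real.sin (π * l) / π) *
    ∫ t in (0 : ℝ)..1, t ^ (l - 1) * (1 - t) ^ (-l) * funHarm f g t x

/-- The logarithmic mean `L(f,g)(x) = ∫₀¹ (f ♯_t g)(x) dt`. -/
noncomputable def funLog {E : Type*} [NormedAddCommGroup E] [NormedSpace ℝ E]
    (f g : E → ℝ) (x : E) : ℝ :=
  ∫ t in (0 : ℝ)..1, funGeom f g t x

/-- The family `U_s(f,g)(x) = ∫₀¹ (f !_{st+(1−s)/2} g)(x) Ψ(t) dt` with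
`Ψ(t) = 1/(t(1−t)(π² + (log(t/(1−t)))²))`. -/
noncomputable def funU {E : Type*} [NormedAddCommGroup E] [NormedSpace ℝ E]
    (f g : E → ℝ) (s : ℝ) (x : E) : ℝ :=
  ∫ t in (0 : ℝ)..1,
    funHarm f g (s * t + (1 - s) / 2) x /
      (t * (1 - t) * (π ^ 2 + Real.log (t / (1 - t)) ^ 2))

lemma interval_to_Ioo (F : ℝ → ℝ) :
    ∫ t in (0:ℝ)..1, F t = ∫ t in Ioo (0:ℝ) 1, F t := by
  rw [intervalIntegral.integral_of_le zero_le_one, integral_Ioc_eq_integral_Ioo]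

lemma arg_mem {s t : ℝ} (hs : s ∈ Icc (-1:ℝ) 1) (ht : t ∈ Ioo (0:ℝ) 1) :
    s * t + (1 - s) / 2 ∈ Ioo (0:ℝ) 1 := by
  have h1 : |2 * t - 1| < 1 := abs_lt.mpr ⟨by linarith [ht.1], by linarith [ht.2]⟩
  have h2 : |s| ≤ 1 := abs_le.mpr hs
  have key : |s * (2 * t - 1)| < 1 := by
    rw [abs_mul]
    calc |s| * |2 * t - 1| ≤ 1 * |2 * t - 1| :=
          mul_le_mul_of_nonneg_right h2 (abs_nonneg _)
      _ = |2 * t - 1| := one_mul _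
      _ < 1 := h1
  obtain ⟨k1, k2⟩ := abs_lt.mp key
  constructor <;> nlinarith

section Aux2
variable {E : Type*} [NormedAddCommGroup E] [NormedSpace ℝ E]
  {f g : E → ℝ} {x : E} {φ₀ : E →L[ℝ] ℝ} {c : ℝ}
  (hm : ∀ u, φ₀ u - c ≤ f u ∧ φ₀ u - c ≤ g u)

lemma funU_eq (s : ℝ) :
    funU f g s x = ∫ t in Ioo (0:ℝ) 1, funHarm f g (s * t + (1 - s) / 2) x * psi t := by
  unfold funU
  rw [interval_to_Ioo]
  simp_rw [div_eq_mul_inv]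
  rfl

include hm in
lemma integrand_integrable {s : ℝ} (hs : s ∈ Icc (-1:ℝ) 1) :
    IntegrableOn (fun t => funHarm f g (s * t + (1 - s) / 2) x * psi t) (Ioo (0:ℝ) 1) := by
  have hmaps : MapsTo (fun t => s * t + (1 - s) / 2) (Ioo (0:ℝ) 1) (Ioo (0:ℝ) 1) :=
    fun t ht => arg_mem hs ht
  have hcont : ContinuousOn (fun t => funHarm f g (s * t + (1 - s) / 2) x * psi t)
      (Ioo (0:ℝ) 1) := by
    exact ((funHarm_contOn hm).comp (by fun_prop) hmaps).mul psi_contOn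
  refine Integrable.mono' ((psi_integrableOn.const_mul (|φ₀ x - c| + |f x| + |g x|)))
    (hcont.aestronglyMeasurable measurableSet_Ioo) ?_
  rw [ae_restrict_iff' measurableSet_Ioo]
  refine Filter.Eventually.of_forall fun t ht => ?_
  have hmem := Ioo_subset_Icc_self (arg_mem hs ht)
  have hb := funHarm_abs_le (x := x) hm hmem
  have hp := (psi_pos ht).le
  rw [Real.norm_eq_abs, abs_mul, abs_of_nonneg hp]
  exact mul_le_mul_of_nonneg_right hb hp

include hm in
lemma funU_convex_comb {s₁ s₂ a b : ℝ} (hs₁ : s₁ ∈ Icc (-1:ℝ) 1) (hs₂ : s₂ ∈ Icc (-1:ℝ) 1)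
    (ha : 0 ≤ a) (hb : 0 ≤ b) (hab : a + b = 1) :
    funU f g (a * s₁ + b * s₂) x ≤ a * funU f g s₁ x + b * funU f g s₂ x := by
  have hmem : a * s₁ + b * s₂ ∈ Icc (-1:ℝ) 1 := by
    constructor <;> nlinarith [hs₁.1, hs₁.2, hs₂.1, hs₂.2]
  rw [funU_eq, funU_eq, funU_eq, ← MeasureTheory.integral_const_mul,
    ← MeasureTheory.integral_const_mul, ← MeasureTheory.integral_add
      ((integrand_integrable hm hs₁).const_mul a) ((integrand_integrable hm hs₂).const_mul b)]
  refine setIntegral_mono_on (integrand_integrable hm hmem)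
    (((integrand_integrable hm hs₁).const_mul a).add
      ((integrand_integrable hm hs₂).const_mul b)) measurableSet_Ioo fun t ht => ?_
  have e : (a * s₁ + b * s₂) * t + (1 - (a * s₁ + b * s₂)) / 2
      = a * (s₁ * t + (1 - s₁) / 2) + b * (s₂ * t + (1 - s₂) / 2) := by
    have hb' : b = 1 - a := by linarith
    subst hb'; ring
  have hcx := (funHarm_convexOn (x := x) hm).2
    (Ioo_subset_Icc_self (arg_mem hs₁ ht)) (Ioo_subset_Icc_self (arg_mem hs₂ ht)) ha hb hab
  simp only [smul_eq_mul] at hcx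
  rw [e]
  have hp := (psi_pos ht).le
  calc funHarm f g (a * (s₁ * t + (1 - s₁) / 2) + b * (s₂ * t + (1 - s₂) / 2)) x * psi t
      ≤ (a * funHarm f g (s₁ * t + (1 - s₁) / 2) x
          + b * funHarm f g (s₂ * t + (1 - s₂) / 2) x) * psi t :=
        mul_le_mul_of_nonneg_right hcx hp
    _ = a * (funHarm f g (s₁ * t + (1 - s₁) / 2) x * psi t)
          + b * (funHarm f g (s₂ * t + (1 - s₂) / 2) x * psi t) := by ring

lemma denom_symm (t : ℝ) : (1 - t) * (1 - (1 - t)) * (π ^ 2 + Real.log ((1 - t) / (1 - (1 - t))) ^ 2)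
    = t * (1 - t) * (π ^ 2 + Real.log (t / (1 - t)) ^ 2) := by
  have e2 : (1 - t) / (1 - (1 - t)) = (t / (1 - t))⁻¹ := by
    rw [inv_div]; ring_nf
  rw [e2, Real.log_inv]
  ring_nf

lemma funU_symm (s : ℝ) : funU f g (-s) x = funU f g s x := by
  unfold funU
  calc (∫ t in (0:ℝ)..1, funHarm f g (-s * t + (1 - -s) / 2) x /
        (t * (1 - t) * (π ^ 2 + Real.log (t / (1 - t)) ^ 2)))
      = ∫ t in (0:ℝ)..1, funHarm f g (s * (1 - t) + (1 - s) / 2) x /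
        ((1 - t) * (1 - (1 - t)) * (π ^ 2 + Real.log ((1 - t) / (1 - (1 - t))) ^ 2)) := by
        refine intervalIntegral.integral_congr fun t _ => ?_
        have e1 : s * (1 - t) + (1 - s) / 2 = -s * t + (1 - -s) / 2 := by ring
        rw [e1, denom_symm]
    _ = ∫ t in (0:ℝ)..1, funHarm f g (s * t + (1 - s) / 2) x /
        (t * (1 - t) * (π ^ 2 + Real.log (t / (1 - t)) ^ 2)) := by
        rw [intervalIntegral.integral_comp_sub_left (fun t => funHarm f g (s * t + (1 - s) / 2) x /
          (t * (1 - t) * (π ^ 2 + Real.log (t / (1 - t)) ^ 2))) 1]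
        norm_num

lemma funU_zero : funU f g 0 x = funHarm f g (1/2) x := by
  rw [funU_eq]
  have : ∀ t : ℝ, funHarm f g (0 * t + (1 - 0) / 2) x * psi t
      = funHarm f g (1/2) x * psi t := by
    intro t; norm_num
  simp_rw [this]
  rw [MeasureTheory.integral_const_mul, psi_integral_one, mul_one]

include hm in
lemma harm_le_funU {s : ℝ} (hs : s ∈ Icc (-1:ℝ) 1) :
    funHarm f g (1/2) x ≤ funU f g s x := by
  have hns : -s ∈ Icc (-1:ℝ) 1 := ⟨by linarith [hs.2], by linarith [hs.1]⟩
  have hsymm := funU_symm (f := f) (g := g) (x := x) s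
  have key : 2 * funHarm f g (1/2) x ≤ funU f g s x + funU f g (-s) x := by
    rw [funU_eq, funU_eq, ← MeasureTheory.integral_add (integrand_integrable hm hs)
      (integrand_integrable hm hns)]
    have h2 : (2:ℝ) * funHarm f g (1/2) x = ∫ t in Ioo (0:ℝ) 1,
        2 * funHarm f g (1/2) x * psi t := by
      rw [MeasureTheory.integral_const_mul, psi_integral_one, mul_one]
    rw [h2]
    refine setIntegral_mono_on (psi_integrableOn.const_mul (2 * funHarm f g (1/2) x))
      ((integrand_integrable hm hs).add (integrand_integrable hm hns))
      measurableSet_Ioo fun t ht => ?_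
    have hcx := (funHarm_convexOn (x := x) hm).2
      (Ioo_subset_Icc_self (arg_mem hs ht)) (Ioo_subset_Icc_self (arg_mem hns ht))
      (by norm_num : (0:ℝ) ≤ 1/2) (by norm_num : (0:ℝ) ≤ 1/2) (by norm_num)
    simp only [smul_eq_mul] at hcx
    have e : (1:ℝ)/2 * (s * t + (1 - s) / 2) + 1/2 * (-s * t + (1 - -s) / 2) = 1/2 := by ring
    rw [e] at hcx
    have hp := (psi_pos ht).le
    calc 2 * funHarm f g (1/2) x * psi t
        ≤ (funHarm f g (s * t + (1 - s) / 2) x + funHarm f g (-s * t + (1 - -s) / 2) x)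
          * psi t := by
          refine mul_le_mul_of_nonneg_right ?_ hp
          linarith
      _ = funHarm f g (s * t + (1 - s) / 2) x * psi t
          + funHarm f g (-s * t + (1 - -s) / 2) x * psi t := by ring
  linarith [key, hsymm]

end Aux2

/-! ### The sine-exponential integral and kernel estimates -/

lemma sinexp_integral (b : ℝ) :
    ∫ l in (0:ℝ)..1, Real.sin (π * l) * Real.exp (b * l)
      = π * (Real.exp b + 1) / (π ^ 2 + b ^ 2) := by
  have hden : (0:ℝ) < π ^ 2 + b ^ 2 := by positivity
  set A : ℝ → ℝ := fun l =>
    Real.exp (b * l) * (b * Real.sin (π * l) - π * Real.cos (π * l)) / (π ^ 2 + b ^ 2) with hA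
  have hderiv : ∀ l ∈ Set.uIcc (0:ℝ) 1,
      HasDerivAt A (Real.sin (π * l) * Real.exp (b * l)) l := by
    intro l _
    have h1 : HasDerivAt (fun l : ℝ => Real.exp (b * l)) (b * Real.exp (b * l)) l := by
      simpa [Function.comp_def, mul_comm] using (Real.hasDerivAt_exp (b * l)).comp l ((hasDerivAt_id l).const_mul b)
    have h2 : HasDerivAt (fun l : ℝ => Real.sin (π * l)) (π * Real.cos (π * l)) l := by
      simpa [Function.comp_def, mul_comm] using (Real.hasDerivAt_sin (π * l)).comp l ((hasDerivAt_id l).const_mul π)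
    have h3 : HasDerivAt (fun l : ℝ => Real.cos (π * l)) (-(π * Real.sin (π * l))) l := by
      simpa [Function.comp_def, mul_comm, neg_mul] using
        (Real.hasDerivAt_cos (π * l)).comp l ((hasDerivAt_id l).const_mul π)
    have h4 := ((h1.mul ((h2.const_mul b).sub (h3.const_mul π))).div_const (π ^ 2 + b ^ 2))
    refine h4.congr_deriv ?_
    simp only [Pi.sub_apply]
    field_simp
    ring
  have hint : IntervalIntegrable (fun l => Real.sin (π * l) * Real.exp (b * l)) volume 0 1 :=
    (Continuous.mul (by fun_prop) (by fun_prop)).intervalIntegrable 0 1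
  rw [intervalIntegral.integral_eq_sub_of_hasDerivAt hderiv hint]
  rw [hA]
  simp only [mul_one, mul_zero, Real.sin_pi, Real.cos_pi, Real.exp_zero, Real.sin_zero,
    Real.cos_zero]
  field_simp
  ring

lemma rpow_left_integrableOn {r : ℝ} (h : -1 < r) :
    IntegrableOn (fun t : ℝ => t ^ r) (Ioo (0:ℝ) 1) := by
  have := (intervalIntegral.intervalIntegrable_rpow' (a := 0) (b := 1) h)
  rw [intervalIntegrable_iff_integrableOn_Ioo_of_le zero_le_one] at this
  exact this

lemma rpow_right_integrableOn {r : ℝ} (h : -1 < r) :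
    IntegrableOn (fun t : ℝ => (1 - t) ^ r) (Ioo (0:ℝ) 1) := by
  have := ((intervalIntegral.intervalIntegrable_rpow' (a := 0) (b := 1) h).comp_sub_left 1)
  norm_num at this
  replace this := this.symm
  rw [intervalIntegrable_iff_integrableOn_Ioo_of_le zero_le_one] at this
  exact this

lemma rpow_left_integral {r : ℝ} (h : -1 < r) :
    ∫ t in Ioo (0:ℝ) 1, t ^ r = 1 / (r + 1) := by
  rw [← interval_to_Ioo]
  rw [integral_rpow (Or.inl h)]
  have hr : r + 1 ≠ 0 := by linarith
  rw [Real.one_rpow, Real.zero_rpow hr]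
  ring

lemma rpow_right_integral {r : ℝ} (h : -1 < r) :
    ∫ t in Ioo (0:ℝ) 1, (1 - t) ^ r = 1 / (r + 1) := by
  rw [← interval_to_Ioo]
  rw [intervalIntegral.integral_comp_sub_left (fun u => u ^ r) 1]
  norm_num
  rw [integral_rpow (Or.inl h)]
  have hr : r + 1 ≠ 0 := by linarith
  rw [Real.one_rpow, Real.zero_rpow hr]
  ring

lemma kern_nonneg {l t : ℝ} (ht : t ∈ Ioo (0:ℝ) 1) :
    0 ≤ t ^ (l - 1) * (1 - t) ^ (-l) := by
  have h1 : (0:ℝ) < t := ht.1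
  have h2 : (0:ℝ) < 1 - t := by linarith [ht.2]
  positivity

lemma kern_le {l t : ℝ} (hl : l ∈ Ioo (0:ℝ) 1) (ht : t ∈ Ioo (0:ℝ) 1) :
    t ^ (l - 1) * (1 - t) ^ (-l) ≤ 2 * t ^ (l - 1) + 2 * (1 - t) ^ (-l) := by
  have h1 : (0:ℝ) < t := ht.1
  have h2 : (0:ℝ) < 1 - t := by linarith [ht.2]
  have hl0 : (0:ℝ) < l := hl.1
  have hl1 : l < 1 := hl.2
  rcases le_total t (1/2) with hc | hc
  · -- (1-t) ≥ 1/2, so (1-t)^(-l) ≤ (1/2)^(-l) = 2^l ≤ 2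
    have hb : (1:ℝ)/2 ≤ 1 - t := by linarith
    have e1 : (1 - t) ^ (-l) ≤ ((1:ℝ)/2) ^ (-l) :=
      Real.rpow_le_rpow_of_nonpos (by norm_num) hb (by linarith)
    have e2 : ((1:ℝ)/2) ^ (-l) = (2:ℝ) ^ l := by
      rw [one_div, Real.inv_rpow (by norm_num), Real.rpow_neg (by norm_num), inv_inv]
    have e3 : (2:ℝ) ^ l ≤ 2 := by
      calc (2:ℝ) ^ l ≤ (2:ℝ) ^ (1:ℝ) :=
            Real.rpow_le_rpow_of_exponent_le one_le_two hl1.le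
        _ = 2 := Real.rpow_one 2
    have hpos : (0:ℝ) ≤ t ^ (l - 1) := by positivity
    have : t ^ (l - 1) * (1 - t) ^ (-l) ≤ t ^ (l - 1) * 2 := by
      apply mul_le_mul_of_nonneg_left _ hpos
      calc (1 - t) ^ (-l) ≤ ((1:ℝ)/2) ^ (-l) := e1
        _ = (2:ℝ) ^ l := e2
        _ ≤ 2 := e3
    have hpos2 : (0:ℝ) ≤ (1 - t) ^ (-l) := by positivity
    nlinarith
  · have hb : (1:ℝ)/2 ≤ t := hc
    have e1 : t ^ (l - 1) ≤ ((1:ℝ)/2) ^ (l - 1) :=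
      Real.rpow_le_rpow_of_nonpos (by norm_num) hb (by linarith)
    have e2 : ((1:ℝ)/2) ^ (l - 1) = (2:ℝ) ^ (1 - l) := by
      rw [one_div, Real.inv_rpow (by norm_num), ← Real.rpow_neg (by norm_num), neg_sub]
    have e3 : (2:ℝ) ^ (1 - l) ≤ 2 := by
      calc (2:ℝ) ^ (1 - l) ≤ (2:ℝ) ^ (1:ℝ) :=
            Real.rpow_le_rpow_of_exponent_le one_le_two (by linarith)
        _ = 2 := Real.rpow_one 2
    have hpos : (0:ℝ) ≤ (1 - t) ^ (-l) := by positivity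
    have : t ^ (l - 1) * (1 - t) ^ (-l) ≤ 2 * (1 - t) ^ (-l) := by
      apply mul_le_mul_of_nonneg_right _ hpos
      calc t ^ (l - 1) ≤ ((1:ℝ)/2) ^ (l - 1) := e1
        _ = (2:ℝ) ^ (1 - l) := e2
        _ ≤ 2 := e3
    have hpos2 : (0:ℝ) ≤ t ^ (l - 1) := by positivity
    nlinarith

lemma kern_dom_integrableOn {l : ℝ} (hl : l ∈ Ioo (0:ℝ) 1) :
    IntegrableOn (fun t : ℝ => 2 * t ^ (l - 1) + 2 * (1 - t) ^ (-l)) (Ioo (0:ℝ) 1) :=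
  ((rpow_left_integrableOn (by linarith [hl.1])).const_mul 2).add
    ((rpow_right_integrableOn (by linarith [hl.2])).const_mul 2)

lemma kern_dom_integral {l : ℝ} (hl : l ∈ Ioo (0:ℝ) 1) :
    ∫ t in Ioo (0:ℝ) 1, (2 * t ^ (l - 1) + 2 * (1 - t) ^ (-l)) = 2 / l + 2 / (1 - l) := by
  rw [MeasureTheory.integral_add ((rpow_left_integrableOn (by linarith [hl.1])).const_mul 2)
    ((rpow_right_integrableOn (by linarith [hl.2])).const_mul 2),
    MeasureTheory.integral_const_mul, MeasureTheory.integral_const_mul,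
    rpow_left_integral (by linarith [hl.1]), rpow_right_integral (by linarith [hl.2])]
  have h1 : l - 1 + 1 = l := by ring
  have h2 : -l + 1 = 1 - l := by ring
  rw [h1, h2]
  ring

lemma sin_weight_bound {l : ℝ} (hl : l ∈ Ioo (0:ℝ) 1) :
    Real.sin (π * l) / π * (2 / l + 2 / (1 - l)) ≤ 4 := by
  have hl0 : (0:ℝ) < l := hl.1
  have hl1 : l < 1 := hl.2
  have hs1 : Real.sin (π * l) ≤ π * l := Real.sin_le (by positivity)
  have hs2 : Real.sin (π * l) ≤ π * (1 - l) := by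
    have : Real.sin (π * l) = Real.sin (π - π * l) := (Real.sin_pi_sub _).symm
    rw [this]
    have : π - π * l = π * (1 - l) := by ring
    rw [this]
    exact Real.sin_le (by nlinarith [pi_pos])
  have hs0 : 0 ≤ Real.sin (π * l) := by
    apply Real.sin_nonneg_of_nonneg_of_le_pi (by positivity)
    nlinarith [pi_pos]
  rw [div_mul_eq_mul_div, div_le_iff₀ pi_pos]
  have e1 : Real.sin (π * l) * (2 / l) ≤ 2 * π := by
    rw [mul_div_assoc']
    rw [div_le_iff₀ hl0]
    nlinarith
  have e2 : Real.sin (π * l) * (2 / (1 - l)) ≤ 2 * π := by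
    rw [mul_div_assoc']
    rw [div_le_iff₀ (by linarith : (0:ℝ) < 1 - l)]
    nlinarith
  nlinarith [e1, e2]

section Aux3
variable {E : Type*} [NormedAddCommGroup E] [NormedSpace ℝ E]
  {f g : E → ℝ} {x : E} {φ₀ : E →L[ℝ] ℝ} {c : ℝ}
  (hm : ∀ u, φ₀ u - c ≤ f u ∧ φ₀ u - c ≤ g u)

lemma funGeom_eq (l : ℝ) :
    funGeom f g l x = ∫ t in Ioo (0:ℝ) 1,
      Real.sin (π * l) / π * (t ^ (l - 1) * (1 - t) ^ (-l)) * funHarm f g t x := by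
  unfold funGeom
  rw [interval_to_Ioo, ← MeasureTheory.integral_const_mul]
  exact setIntegral_congr_fun measurableSet_Ioo fun t _ => by ring

include hm in
lemma F_abs_le {l t : ℝ} (hl : l ∈ Ioo (0:ℝ) 1) (ht : t ∈ Ioo (0:ℝ) 1) :
    ‖Real.sin (π * l) / π * (t ^ (l - 1) * (1 - t) ^ (-l)) * funHarm f g t x‖
      ≤ Real.sin (π * l) / π * (|φ₀ x - c| + |f x| + |g x|)
        * (2 * t ^ (l - 1) + 2 * (1 - t) ^ (-l)) := by
  have hk := kern_nonneg (l := l) ht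
  have hkl := kern_le hl ht
  have habs : |funHarm f g t x| ≤ |φ₀ x - c| + |f x| + |g x| :=
    funHarm_abs_le hm (Ioo_subset_Icc_self ht)
  have hsin0 : 0 ≤ Real.sin (π * l) / π := by
    apply div_nonneg _ pi_pos.le
    apply Real.sin_nonneg_of_nonneg_of_le_pi (mul_nonneg pi_pos.le hl.1.le)
    nlinarith [pi_pos, hl.2]
  rw [Real.norm_eq_abs, abs_mul, abs_mul, abs_of_nonneg hsin0, abs_of_nonneg hk]
  have hM0 : 0 ≤ |φ₀ x - c| + |f x| + |g x| := by positivity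
  calc Real.sin (π * l) / π * (t ^ (l - 1) * (1 - t) ^ (-l)) * |funHarm f g t x|
      ≤ Real.sin (π * l) / π * (t ^ (l - 1) * (1 - t) ^ (-l))
        * (|φ₀ x - c| + |f x| + |g x|) :=
        mul_le_mul_of_nonneg_left habs (by positivity)
    _ ≤ Real.sin (π * l) / π * (2 * t ^ (l - 1) + 2 * (1 - t) ^ (-l))
        * (|φ₀ x - c| + |f x| + |g x|) := by
        apply mul_le_mul_of_nonneg_right _ hM0
        exact mul_le_mul_of_nonneg_left hkl hsin0
    _ = Real.sin (π * l) / π * (|φ₀ x - c| + |f x| + |g x|)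
        * (2 * t ^ (l - 1) + 2 * (1 - t) ^ (-l)) := by ring

include hm in
lemma F_contOn :
    ContinuousOn (Function.uncurry fun l t =>
      Real.sin (π * l) / π * (t ^ (l - 1) * (1 - t) ^ (-l)) * funHarm f g t x)
      (Ioo (0:ℝ) 1 ×ˢ Ioo (0:ℝ) 1) := by
  apply ContinuousOn.mul
  · apply ContinuousOn.mul
    · fun_prop
    · apply ContinuousOn.mul
      · apply ContinuousOn.rpow (by fun_prop) (by fun_prop)
        intro p hp
        exact Or.inl (ne_of_gt hp.2.1)
      · apply ContinuousOn.rpow (by fun_prop) (by fun_prop)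
        intro p hp
        exact Or.inl (ne_of_gt (show (0:ℝ) < 1 - p.2 by linarith [hp.2.2]))
  · exact (funHarm_contOn hm).comp (by fun_prop) fun p hp => hp.2

include hm in
lemma F_integrable_slice {l : ℝ} (hl : l ∈ Ioo (0:ℝ) 1) :
    IntegrableOn (fun t => Real.sin (π * l) / π * (t ^ (l - 1) * (1 - t) ^ (-l))
      * funHarm f g t x) (Ioo (0:ℝ) 1) := by
  refine Integrable.mono' ((kern_dom_integrableOn hl).const_mul
    (Real.sin (π * l) / π * (|φ₀ x - c| + |f x| + |g x|))) ?_ ?_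
  · have hmaps : MapsTo (fun t : ℝ => (l, t)) (Ioo (0:ℝ) 1)
        (Ioo (0:ℝ) 1 ×ˢ Ioo (0:ℝ) 1) := fun t ht => ⟨hl, ht⟩
    exact (((F_contOn hm).comp (by fun_prop) hmaps).aestronglyMeasurable measurableSet_Ioo)
  · rw [ae_restrict_iff' measurableSet_Ioo]
    exact Filter.Eventually.of_forall fun t ht => F_abs_le hm hl ht

include hm in
lemma F_norm_integral_le {l : ℝ} (hl : l ∈ Ioo (0:ℝ) 1) :
    (∫ t in Ioo (0:ℝ) 1, ‖Real.sin (π * l) / π * (t ^ (l - 1) * (1 - t) ^ (-l))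
      * funHarm f g t x‖) ≤ 4 * (|φ₀ x - c| + |f x| + |g x|) := by
  have hM0 : 0 ≤ |φ₀ x - c| + |f x| + |g x| := by positivity
  have step1 : (∫ t in Ioo (0:ℝ) 1, ‖Real.sin (π * l) / π * (t ^ (l - 1) * (1 - t) ^ (-l))
      * funHarm f g t x‖)
      ≤ ∫ t in Ioo (0:ℝ) 1, Real.sin (π * l) / π * (|φ₀ x - c| + |f x| + |g x|)
        * (2 * t ^ (l - 1) + 2 * (1 - t) ^ (-l)) := by
    refine setIntegral_mono_on (F_integrable_slice hm hl).norm
      ((kern_dom_integrableOn hl).const_mul _) measurableSet_Ioo fun t ht =>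
      F_abs_le hm hl ht
  have step2 : (∫ t in Ioo (0:ℝ) 1, Real.sin (π * l) / π * (|φ₀ x - c| + |f x| + |g x|)
        * (2 * t ^ (l - 1) + 2 * (1 - t) ^ (-l)))
      = Real.sin (π * l) / π * (|φ₀ x - c| + |f x| + |g x|) * (2 / l + 2 / (1 - l)) := by
    rw [MeasureTheory.integral_const_mul, kern_dom_integral hl]
  have step3 : Real.sin (π * l) / π * (|φ₀ x - c| + |f x| + |g x|) * (2 / l + 2 / (1 - l))
      ≤ 4 * (|φ₀ x - c| + |f x| + |g x|) := by
    have := sin_weight_bound hl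
    have hsin0 : 0 ≤ Real.sin (π * l) / π := by
      apply div_nonneg _ pi_pos.le
      apply Real.sin_nonneg_of_nonneg_of_le_pi (mul_nonneg pi_pos.le hl.1.le)
      nlinarith [pi_pos, hl.2]
    calc Real.sin (π * l) / π * (|φ₀ x - c| + |f x| + |g x|) * (2 / l + 2 / (1 - l))
        = (Real.sin (π * l) / π * (2 / l + 2 / (1 - l))) * (|φ₀ x - c| + |f x| + |g x|) := by
          ring
      _ ≤ 4 * (|φ₀ x - c| + |f x| + |g x|) := mul_le_mul_of_nonneg_right this hM0
  rw [step2] at step1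
  linarith

include hm in
lemma F_prod_integrable :
    Integrable (Function.uncurry fun l t =>
      Real.sin (π * l) / π * (t ^ (l - 1) * (1 - t) ^ (-l)) * funHarm f g t x)
      ((volume.restrict (Ioo (0:ℝ) 1)).prod (volume.restrict (Ioo (0:ℝ) 1))) := by
  have hmeas : AEStronglyMeasurable (Function.uncurry fun l t =>
      Real.sin (π * l) / π * (t ^ (l - 1) * (1 - t) ^ (-l)) * funHarm f g t x)
      ((volume.restrict (Ioo (0:ℝ) 1)).prod (volume.restrict (Ioo (0:ℝ) 1))) := by
    rw [Measure.prod_restrict]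
    exact (F_contOn hm).aestronglyMeasurable (measurableSet_Ioo.prod measurableSet_Ioo)
  rw [MeasureTheory.integrable_prod_iff hmeas]
  constructor
  · rw [ae_restrict_iff' measurableSet_Ioo]
    exact Filter.Eventually.of_forall fun l hl => F_integrable_slice hm hl
  · refine Integrable.mono' (integrable_const (4 * (|φ₀ x - c| + |f x| + |g x|)))
      hmeas.norm.integral_prod_right' ?_
    rw [ae_restrict_iff' measurableSet_Ioo]
    refine Filter.Eventually.of_forall fun l hl => ?_
    rw [Real.norm_eq_abs, abs_of_nonneg (integral_nonneg fun t => norm_nonneg _)]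
    exact F_norm_integral_le hm hl

lemma F_inner_integral {t : ℝ} (ht : t ∈ Ioo (0:ℝ) 1) :
    (∫ l in Ioo (0:ℝ) 1,
      Real.sin (π * l) / π * (t ^ (l - 1) * (1 - t) ^ (-l)) * funHarm f g t x)
      = funHarm f g t x * psi t := by
  have h1 : (0:ℝ) < t := ht.1
  have h2 : (0:ℝ) < 1 - t := by linarith [ht.2]
  set b := Real.log (t / (1 - t)) with hbdef
  have hexpb : Real.exp b = t / (1 - t) := Real.exp_log (by positivity)
  have hkern : ∀ l : ℝ, t ^ (l - 1) * (1 - t) ^ (-l) = t⁻¹ * Real.exp (b * l) := by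
    intro l
    rw [Real.rpow_def_of_pos h1, Real.rpow_def_of_pos h2, ← Real.exp_add]
    have ht' : t⁻¹ = Real.exp (-(Real.log t)) := by
      rw [Real.exp_neg, Real.exp_log h1]
    rw [ht', ← Real.exp_add]
    congr 1
    have hb' : b = Real.log t - Real.log (1 - t) := by
      rw [hbdef, Real.log_div (ne_of_gt h1) (ne_of_gt h2)]
    rw [hb']
    ring
  rw [← interval_to_Ioo]
  have hcongr : ∀ l ∈ Set.uIcc (0:ℝ) 1,
      Real.sin (π * l) / π * (t ^ (l - 1) * (1 - t) ^ (-l)) * funHarm f g t x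
      = funHarm f g t x * (t⁻¹ / π) * (Real.sin (π * l) * Real.exp (b * l)) := by
    intro l _
    rw [hkern l]
    ring
  rw [intervalIntegral.integral_congr hcongr, intervalIntegral.integral_const_mul,
    sinexp_integral b, hexpb]
  unfold psi
  rw [← hbdef]
  have hden : (0:ℝ) < π ^ 2 + b ^ 2 := by positivity
  field_simp
  ring

include hm in
lemma funU_one_eq_funLog : funU f g 1 x = funLog f g x := by
  have hswap := MeasureTheory.integral_integral_swap
    (μ := volume.restrict (Ioo (0:ℝ) 1)) (ν := volume.restrict (Ioo (0:ℝ) 1))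
    (f := fun l t => Real.sin (π * l) / π * (t ^ (l - 1) * (1 - t) ^ (-l)) * funHarm f g t x)
    (F_prod_integrable hm)
  have hlog : funLog f g x = ∫ l in Ioo (0:ℝ) 1, ∫ t in Ioo (0:ℝ) 1,
      Real.sin (π * l) / π * (t ^ (l - 1) * (1 - t) ^ (-l)) * funHarm f g t x := by
    unfold funLog
    rw [interval_to_Ioo]
    exact setIntegral_congr_fun measurableSet_Ioo fun l _ => funGeom_eq l
  have hU : funU f g 1 x = ∫ t in Ioo (0:ℝ) 1, funHarm f g t x * psi t := by
    rw [funU_eq]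
    refine setIntegral_congr_fun measurableSet_Ioo fun t _ => ?_
    norm_num
  rw [hU, hlog, hswap]
  refine setIntegral_congr_fun measurableSet_Ioo fun t ht => ?_
  exact (F_inner_integral ht).symm

end Aux3

/-- For every `s ∈ [0,1]` and every `x`,
`(f ! g)(x) ≤ U_s(f,g)(x) ≤ (1−s)(f ! g)(x) + s L(f,g)(x) ≤ L(f,g)(x)`; moreover, for each
fixed `x`, the map `s ↦ U_s(f,g)(x)` is convex and monotone increasing on `[0,1]`. -/
theorem funU_between_harm_and_log
    {E : Type*} [NormedAddCommGroup E] [NormedSpace ℝ E]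
    (f g : E → ℝ)
    (hf : ConvexOn ℝ Set.univ f) (hfc : Continuous f)
    (hg : ConvexOn ℝ Set.univ g) (hgc : Continuous g)
    (hmin : ∃ φ₀ : E →L[ℝ] ℝ, ∃ c : ℝ, ∀ u : E, φ₀ u - c ≤ f u ∧ φ₀ u - c ≤ g u) :
    (∀ s ∈ Set.Icc (0 : ℝ) 1, ∀ x : E,
      funHarm f g (1 / 2) x ≤ funU f g s x ∧
      funU f g s x ≤ (1 - s) * funHarm f g (1 / 2) x + s * funLog f g x ∧
      (1 - s) * funHarm f g (1 / 2) x + s * funLog f g x ≤ funLog f g x) ∧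
    ∀ x : E,
      ConvexOn ℝ (Set.Icc (0 : ℝ) 1) (fun s => funU f g s x) ∧
      MonotoneOn (fun s => funU f g s x) (Set.Icc (0 : ℝ) 1) := by
  obtain ⟨φ₀, c, hm⟩ := hmin
  have h0m : (0:ℝ) ∈ Icc (-1:ℝ) 1 := by norm_num
  have h1m : (1:ℝ) ∈ Icc (-1:ℝ) 1 := by norm_num
  constructor
  · intro s hs x
    have hs' : s ∈ Icc (-1:ℝ) 1 := ⟨by linarith [hs.1], hs.2⟩
    have hHU : funHarm f g (1/2) x ≤ funU f g s x := harm_le_funU hm hs'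
    have hHL : funHarm f g (1/2) x ≤ funLog f g x := by
      have := harm_le_funU (x := x) hm h1m
      rwa [funU_one_eq_funLog hm] at this
    have hmid : funU f g s x ≤ (1 - s) * funHarm f g (1/2) x + s * funLog f g x := by
      have hcomb := funU_convex_comb (x := x) hm h0m h1m
        (by linarith [hs.2] : (0:ℝ) ≤ 1 - s) hs.1 (by ring)
      have he : (1 - s) * 0 + s * 1 = s := by ring
      rw [he, funU_zero, funU_one_eq_funLog hm] at hcomb
      exact hcomb
    refine ⟨hHU, hmid, ?_⟩
    nlinarith [hs.1, hs.2, hHL]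
  · intro x
    constructor
    · refine ⟨convex_Icc _ _, fun s₁ h₁ s₂ h₂ a b ha hb hab => ?_⟩
      have h₁' : s₁ ∈ Icc (-1:ℝ) 1 := ⟨by linarith [h₁.1], h₁.2⟩
      have h₂' : s₂ ∈ Icc (-1:ℝ) 1 := ⟨by linarith [h₂.1], h₂.2⟩
      simpa [smul_eq_mul] using funU_convex_comb (x := x) hm h₁' h₂' ha hb hab
    · intro s₁ h₁ s₂ h₂ h12
      rcases eq_or_lt_of_le h₂.1 with h20 | h20
      · have : s₁ = s₂ := le_antisymm h12 (by rw [← h20]; exact h₁.1)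
        rw [this]
      · have hs₂ : (0:ℝ) < s₂ := h20
        set a := (s₂ - s₁) / (2 * s₂) with hadef
        set b := (s₂ + s₁) / (2 * s₂) with hbdef
        have ha : 0 ≤ a := by
          apply div_nonneg (by linarith) (by linarith)
        have hb : 0 ≤ b := by
          apply div_nonneg (by linarith [h₁.1]) (by linarith)
        have hab : a + b = 1 := by
          rw [hadef, hbdef, ← add_div, div_eq_one_iff_eq (by positivity)]
          ring
        have hrep : a * (-s₂) + b * s₂ = s₁ := by
          rw [hadef, hbdef]
          field_simp
          ring
        have hn : -s₂ ∈ Icc (-1:ℝ) 1 := ⟨by linarith [h₂.2], by linarith⟩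
        have hp : s₂ ∈ Icc (-1:ℝ) 1 := ⟨by linarith, h₂.2⟩
        have := funU_convex_comb (x := x) hm hn hp ha hb hab
        rw [hrep, funU_symm] at this
        calc funU f g s₁ x ≤ a * funU f g s₂ x + b * funU f g s₂ x := this
          _ = funU f g s₂ x := by rw [← add_mul, hab, one_mul]
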